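/- arXiv:math/9812029 — 2 statements merged into one kernel-verified Lean document; each statement's English description precedes it below -/
import Mathlib

section
/- For every j ∈ ℤ, the sum of N(π) over all colored partitions π of length 3 with shape {j−1, j, j} (one part of degree j−1 and two parts of degree j, with arbitrary colors) equals 162. -/
/-- A colored partition: a finitely supported multiplicity function on parts `X_s(j)`,
where `s` is the color and `j ∈ ℤ` the degree.  (Genuine colored partitions have
colors in `{1,…,8}`, expressed by `cpValid`.) -/
abbrev CPart := (ℕ × ℤ) →₀ ℕ

/-- The colored partition consisting of the single part `X_s(j)`. -/
noncomputable def Xp (s : ℕ) (j : ℤ) : CPart := Finsupp.single (s, j) 1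

/-- The colors of all parts lie in `{1,…,8}`. -/
def cpValid (π : CPart) : Prop := ∀ p ∈ π.support, 1 ≤ p.1 ∧ p.1 ≤ 8

/-- The length `ℓ(π)`: the total number of parts. -/
def cpLength (π : CPart) : ℕ := π.sum fun _ m => m

/-- The degree `|π|`: the sum of the degrees of the parts. -/
def cpDeg (π : CPart) : ℤ := π.sum fun p m => (m : ℤ) * p.2

/-- The shape `sh(π)`: the multiset of the degrees of the parts. -/
def cpShape (π : CPart) : Multiset ℤ := π.sum fun p m => Multiset.replicate m p.2

/-- `ρ ⊂ π` : `ρ` is a subpartition of `π`. -/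
def cpSub (ρ π : CPart) : Prop := ∀ p, ρ p ≤ π p

/-- The color pairs `(i₁,i₂)` for elements `X_{i₁}(j)X_{i₂}(j)` of `lt(R̄)`. -/
def eqPairs : List (ℕ × ℕ) :=
  [(1,1),(2,1),(2,2),(3,1),(3,2),(3,3),(4,2),(4,3),(4,4),(5,1),(5,2),(5,3),(5,4),(5,5),
   (6,2),(6,4),(6,5),(6,6),(7,3),(7,4),(7,5),(7,6),(7,7),(8,5),(8,6),(8,7),(8,8)]

/-- The color pairs `(i₁,i₂)` for elements `X_{i₁}(j−1)X_{i₂}(j)` of `lt(R̄)`. -/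
def adjPairs : List (ℕ × ℕ) :=
  [(1,1),(1,2),(1,3),(1,4),(1,5),(1,6),(1,7),(1,8),(2,2),(2,4),(2,6),(2,7),(2,8),
   (3,3),(3,5),(3,6),(3,7),(3,8),(4,7),(4,8),(5,6),(5,8),(6,6),(6,8),(7,7),(7,8),(8,8)]

/-- The set `lt(R̄)` of leading terms of the quadratic relations. -/
def ltR : Set CPart :=
  {ρ | ∃ j : ℤ, ∃ p ∈ eqPairs, ρ = Xp p.1 j + Xp p.2 j} ∪
  {ρ | ∃ j : ℤ, ∃ p ∈ adjPairs, ρ = Xp p.1 (j-1) + Xp p.2 j}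

/-- `E(π) = {ρ ∈ lt(R̄) : ρ ⊂ π}`. -/
def Eset (π : CPart) : Set CPart := {ρ | ρ ∈ ltR ∧ cpSub ρ π}

/-- `N(π) = max(#E(π) − 1, 0)`. -/
noncomputable def Npi (π : CPart) : ℕ := (Eset π).ncard - 1

/-- The set `R`: `lt(R̄)` together with the two families of cubic leading terms. -/
def Rset : Set CPart :=
  ltR ∪ {ρ | ∃ j : ℤ, ρ = Xp 3 (j-1) + Xp 4 j + Xp 1 j ∨
    ρ = Xp 8 (j-1) + Xp 4 (j-1) + Xp 6 j}

/-- The `𝔥`-weight of the color `s`, written in the basis `(α₁, α₂)`. -/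
def wcol : ℕ → ℤ × ℤ
  | 1 => (1, 1)
  | 2 => (1, 0)
  | 3 => (0, 1)
  | 4 => (0, 0)
  | 5 => (0, 0)
  | 6 => (0, -1)
  | 7 => (-1, 0)
  | 8 => (-1, -1)
  | _ => (0, 0)

/-- The weight `wt(π) ∈ ℤ²`. -/
def cpWt (π : CPart) : ℤ × ℤ := π.sum fun p m => m • wcol p.1


noncomputable def Pc (j : ℤ) (a b c : ℕ) : CPart := Xp a (j-1) + Xp b j + Xp c j

lemma Pc_apply (j : ℤ) (a b c : ℕ) (q : ℕ × ℤ) :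
    Pc j a b c q = (if (a, j-1) = q then 1 else 0) + (if (b, j) = q then 1 else 0)
      + (if (c, j) = q then 1 else 0) := by
  simp [Pc, Xp, Finsupp.single_apply]

lemma Pc_pos (j : ℤ) (a b c : ℕ) (q : ℕ × ℤ) :
    1 ≤ Pc j a b c q ↔ ((a, j-1) = q ∨ (b, j) = q ∨ (c, j) = q) := by
  rw [Pc_apply]; split_ifs <;> simp_all

lemma Pc_two (j : ℤ) (a b c : ℕ) (q : ℕ × ℤ) :
    2 ≤ Pc j a b c q ↔ ((b, j) = q ∧ (c, j) = q) := by
  rw [Pc_apply]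
  split_ifs with h1 h2 h3 <;>
    first
      | (subst h1; simp only [Prod.mk.injEq] at * <;> constructor <;> intros <;> omega)
      | simp_all

lemma cpSub_pair (q1 q2 : ℕ × ℤ) (π : CPart) :
    cpSub (Finsupp.single q1 1 + Finsupp.single q2 1) π ↔
      (1 ≤ π q1 ∧ 1 ≤ π q2 ∧ (q1 = q2 → 2 ≤ π q1)) := by
  constructor
  · intro h
    have h1 := h q1
    have h2 := h q2
    simp only [Finsupp.add_apply, Finsupp.single_apply] at h1 h2
    refine ⟨?_, ?_, fun he => ?_⟩
    · split_ifs at h1 <;> omega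
    · split_ifs at h2 <;> omega
    · subst he; simp at h1; omega
  · rintro ⟨h1, h2, h3⟩ q
    simp only [Finsupp.add_apply, Finsupp.single_apply]
    by_cases e1 : q1 = q
    · subst e1
      by_cases e2 : q2 = q1
      · subst e2; simpa using h3 rfl
      · simpa [e2] using h1
    · by_cases e2 : q2 = q
      · subst e2; simpa [e1] using h2
      · simp [e1, e2]

lemma sub_eq_iff (j : ℤ) (a b c : ℕ) (j' : ℤ) (u v : ℕ) :
    cpSub (Xp u j' + Xp v j') (Pc j a b c) ↔
      j' = j ∧ ((u = b ∧ v = c) ∨ (u = c ∧ v = b)) := by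
  rw [Xp, Xp, cpSub_pair, Pc_pos, Pc_pos, Pc_two]
  simp only [Prod.mk.injEq]
  constructor
  · rintro ⟨h1, h2, h3⟩
    rcases h1 with ⟨hu, hj⟩ | ⟨hu, hj⟩ | ⟨hu, hj⟩ <;>
      rcases h2 with ⟨hv, hj'⟩ | ⟨hv, hj'⟩ | ⟨hv, hj'⟩
    · have h4 := (h3 ⟨by omega, trivial⟩).1.2; omega
    · omega
    · omega
    · omega
    · have h4 := (h3 ⟨by omega, trivial⟩).2.1
      exact ⟨by omega, Or.inl ⟨by omega, by omega⟩⟩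
    · exact ⟨by omega, Or.inl ⟨by omega, by omega⟩⟩
    · omega
    · exact ⟨by omega, Or.inr ⟨by omega, by omega⟩⟩
    · have h4 := (h3 ⟨by omega, trivial⟩).1.1
      exact ⟨by omega, Or.inl ⟨by omega, by omega⟩⟩
  · rintro ⟨rfl, ⟨rfl, rfl⟩ | ⟨rfl, rfl⟩⟩ <;>
      exact ⟨by tauto, by tauto, by rintro ⟨rfl, -⟩; tauto⟩

lemma sub_adj_iff (j : ℤ) (a b c : ℕ) (j' : ℤ) (u v : ℕ) :
    cpSub (Xp u (j'-1) + Xp v j') (Pc j a b c) ↔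
      j' = j ∧ u = a ∧ (v = b ∨ v = c) := by
  rw [Xp, Xp, cpSub_pair, Pc_pos, Pc_pos, Pc_two]
  simp only [Prod.mk.injEq]
  constructor
  · rintro ⟨h1, h2, h3⟩
    rcases h1 with ⟨hu, hj⟩ | ⟨hu, hj⟩ | ⟨hu, hj⟩ <;>
      rcases h2 with ⟨hv, hj'⟩ | ⟨hv, hj'⟩ | ⟨hv, hj'⟩ <;>
      first
        | omega
        | exact ⟨by omega, by omega, Or.inl (by omega)⟩
        | exact ⟨by omega, by omega, Or.inr (by omega)⟩
  · rintro ⟨rfl, rfl, rfl | rfl⟩ <;>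
      exact ⟨by tauto, by tauto, by rintro ⟨-, h⟩; omega⟩


def sIf (P : Prop) [Decidable P] (x : CPart) : Set CPart := if P then {x} else ∅

lemma mem_sIf {P : Prop} [Decidable P] {x ρ : CPart} : ρ ∈ sIf P x ↔ P ∧ ρ = x := by
  unfold sIf; split_ifs with h <;> simp [h]

lemma Eset_Pc (j : ℤ) (a b c : ℕ) :
    Eset (Pc j a b c) =
      sIf ((b, c) ∈ eqPairs ∨ (c, b) ∈ eqPairs) (Xp b j + Xp c j) ∪
      (sIf ((a, b) ∈ adjPairs) (Xp a (j-1) + Xp b j) ∪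
       sIf ((a, c) ∈ adjPairs) (Xp a (j-1) + Xp c j)) := by
  ext ρ
  simp only [Eset, ltR, Set.mem_union, Set.mem_setOf_eq, mem_sIf]
  constructor
  · rintro ⟨hlt | hlt, hsub⟩
    · obtain ⟨j', p, hp, rfl⟩ := hlt
      rw [sub_eq_iff] at hsub
      obtain ⟨rfl, h⟩ := hsub
      obtain ⟨p1, p2⟩ := p
      rcases h with ⟨h1, h2⟩ | ⟨h1, h2⟩ <;> dsimp at h1 h2 <;> subst h1 <;> subst h2
      · exact Or.inl ⟨Or.inl hp, rfl⟩
      · exact Or.inl ⟨Or.inr hp, add_comm _ _⟩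
    · obtain ⟨j', p, hp, rfl⟩ := hlt
      rw [sub_adj_iff] at hsub
      obtain ⟨rfl, h1, h2⟩ := hsub
      obtain ⟨p1, p2⟩ := p
      dsimp at h1 h2
      subst h1
      rcases h2 with rfl | rfl
      · exact Or.inr (Or.inl ⟨hp, rfl⟩)
      · exact Or.inr (Or.inr ⟨hp, rfl⟩)
  · rintro (⟨he, rfl⟩ | ⟨hab, rfl⟩ | ⟨hac, rfl⟩)
    · refine ⟨Or.inl ?_, by rw [sub_eq_iff]; tauto⟩
      rcases he with he | he
      · exact ⟨j, (b, c), he, rfl⟩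
      · exact ⟨j, (c, b), he, add_comm _ _⟩
    · exact ⟨Or.inr ⟨j, (a, b), hab, rfl⟩, by rw [sub_adj_iff]; tauto⟩
    · exact ⟨Or.inr ⟨j, (a, c), hac, rfl⟩, by rw [sub_adj_iff]; tauto⟩

def npiVal (a b c : ℕ) : ℕ :=
  ((if (b, c) ∈ eqPairs ∨ (c, b) ∈ eqPairs then 1 else 0) +
   ((if (a, b) ∈ adjPairs then 1 else 0) +
    (if b ≠ c ∧ (a, c) ∈ adjPairs then 1 else 0))) - 1


lemma toMultiset_pairXp (u : ℕ) (x : ℤ) (v : ℕ) (y : ℤ) :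
    Finsupp.toMultiset (Xp u x + Xp v y) = {(u, x), (v, y)} := by
  simp [Xp, Multiset.singleton_add]

lemma Xp_pair_eq_iff (u : ℕ) (x : ℤ) (v : ℕ) (y : ℤ) (u' : ℕ) (x' : ℤ) (v' : ℕ) (y' : ℤ) :
    Xp u x + Xp v y = Xp u' x' + Xp v' y' ↔
      (((u, x) : ℕ × ℤ) = (u', x') ∧ ((v, y) : ℕ × ℤ) = (v', y')) ∨
      (((u, x) : ℕ × ℤ) = (v', y') ∧ ((v, y) : ℕ × ℤ) = (u', x')) := by
  constructor
  · intro h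
    have h2 : ({((u, x) : ℕ × ℤ), (v, y)} : Multiset (ℕ × ℤ)) = {(u', x'), (v', y')} := by
      rw [← toMultiset_pairXp, ← toMultiset_pairXp, h]
    rw [Multiset.insert_eq_cons, Multiset.insert_eq_cons, Multiset.cons_eq_cons] at h2
    rcases h2 with ⟨h3, h4⟩ | ⟨h3, cs, h4, h5⟩
    · exact Or.inl ⟨h3, by simpa using h4⟩
    · rw [Multiset.singleton_eq_cons_iff] at h4 h5
      exact Or.inr ⟨h5.1.symm, h4.1⟩
  · rintro (⟨h1, h2⟩ | ⟨h1, h2⟩)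
    · rw [show Xp u x = Xp u' x' by rw [Xp, Xp, h1],
        show Xp v y = Xp v' y' by rw [Xp, Xp, h2]]
    · rw [show Xp u x = Xp v' y' by rw [Xp, Xp, h1],
        show Xp v y = Xp u' x' by rw [Xp, Xp, h2]]
      exact add_comm _ _

lemma Npi_Pc (j : ℤ) (a b c : ℕ) : Npi (Pc j a b c) = npiVal a b c := by
  unfold Npi npiVal
  rw [Eset_Pc]
  by_cases h4 : b = c
  · subst h4
    by_cases h1 : ((b, b) ∈ eqPairs ∨ (b, b) ∈ eqPairs) <;>
      by_cases h2 : (a, b) ∈ adjPairs <;>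
        simp only [sIf, h1, h2, if_true, if_false, ite_true, ite_false,
          Set.union_self, Set.union_empty, Set.empty_union, ne_eq, not_true_eq_false,
          false_and, and_false]
    · rw [Set.union_singleton,
        Set.ncard_insert_of_notMem (by
          simp only [Set.mem_singleton_iff, Xp_pair_eq_iff, Prod.mk.injEq]; omega),
        Set.ncard_singleton]
    · rw [Set.ncard_singleton]
    · rw [Set.ncard_singleton]
    · rw [Set.ncard_empty]
  · by_cases h1 : ((b, c) ∈ eqPairs ∨ (c, b) ∈ eqPairs) <;>
      by_cases h2 : (a, b) ∈ adjPairs <;>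
        by_cases h3 : (a, c) ∈ adjPairs <;>
          simp only [sIf, h1, h2, h3, if_true, if_false, ite_true, ite_false, ne_eq, h4,
            not_false_eq_true, true_and, and_true, and_false, false_and,
            Set.union_empty, Set.empty_union]
    · rw [Set.union_singleton, Set.singleton_union,
        Set.ncard_insert_of_notMem (by
          simp only [Set.mem_insert_iff, Set.mem_singleton_iff, Xp_pair_eq_iff,
            Prod.mk.injEq]; omega),
        Set.ncard_insert_of_notMem (by
          simp only [Set.mem_singleton_iff, Xp_pair_eq_iff, Prod.mk.injEq]; omega),
        Set.ncard_singleton]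
    · rw [Set.union_singleton,
        Set.ncard_insert_of_notMem (by
          simp only [Set.mem_singleton_iff, Xp_pair_eq_iff, Prod.mk.injEq]; omega),
        Set.ncard_singleton]
    · rw [Set.union_singleton,
        Set.ncard_insert_of_notMem (by
          simp only [Set.mem_singleton_iff, Xp_pair_eq_iff, Prod.mk.injEq]; omega),
        Set.ncard_singleton]
    · rw [Set.ncard_singleton]
    · rw [Set.union_singleton,
        Set.ncard_insert_of_notMem (by
          simp only [Set.mem_singleton_iff, Xp_pair_eq_iff, Prod.mk.injEq]; omega),
        Set.ncard_singleton]
    · rw [Set.ncard_singleton]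
    · rw [Set.ncard_singleton]
    · rw [Set.ncard_empty]


lemma toMultiset_injective : Function.Injective (Finsupp.toMultiset : CPart → Multiset (ℕ × ℤ)) := by
  intro f g h
  have h2 := congrArg Multiset.toFinsupp h
  simpa using h2

lemma toMultiset_Pc (j : ℤ) (a b c : ℕ) :
    Finsupp.toMultiset (Pc j a b c) = {(a, j-1), (b, j), (c, j)} := by
  simp [Pc, Xp, Multiset.singleton_add]

lemma cpLength_eq (π : CPart) : cpLength π = Multiset.card (Finsupp.toMultiset π) := by
  rw [Finsupp.card_toMultiset]; rfl

lemma cpShape_eq (π : CPart) : cpShape π = (Finsupp.toMultiset π).map Prod.snd := by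
  induction π using Finsupp.induction_linear with
  | zero => simp [cpShape]
  | add f g hf hg =>
      rw [map_add, Multiset.map_add, ← hf, ← hg]
      unfold cpShape
      rw [Finsupp.sum_add_index]
      · intro p _; simp
      · intro p _ m n; exact Multiset.replicate_add _ _ _
  | single p n =>
      unfold cpShape
      rw [Finsupp.sum_single_index (by simp), Finsupp.toMultiset_single]
      simp [Multiset.map_nsmul, Multiset.nsmul_singleton]

def triples : Finset (ℕ × ℕ × ℕ) :=
  ((Finset.Icc 1 8) ×ˢ (Finset.Icc 1 8) ×ˢ (Finset.Icc 1 8)).filter fun t => t.2.1 ≤ t.2.2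

lemma shape_Pc (j : ℤ) (a b c : ℕ) : cpShape (Pc j a b c) = {j - 1, j, j} := by
  rw [cpShape_eq, toMultiset_Pc]; simp

lemma mem_set_iff (j : ℤ) (π : CPart) :
    π ∈ {π : CPart | cpValid π ∧ cpLength π = 3 ∧ cpShape π = {j - 1, j, j}} ↔
      ∃ t ∈ triples, Pc j t.1 t.2.1 t.2.2 = π := by
  constructor
  · rintro ⟨hv, hl, hs⟩
    rw [cpLength_eq] at hl
    obtain ⟨p, q, r, hm⟩ := Multiset.card_eq_three.mp hl
    rw [cpShape_eq, hm] at hs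
    simp only [Multiset.insert_eq_cons, Multiset.map_cons, Multiset.map_singleton] at hs
    -- exactly one of the three second components is j - 1
    have hmem : ∀ z : ℕ × ℤ, z ∈ Finsupp.toMultiset π → 1 ≤ z.1 ∧ z.1 ≤ 8 := by
      intro z hz
      exact hv z ((Finsupp.mem_toMultiset π z).mp hz)
    have hmemp := hmem p (by rw [hm]; simp)
    have hmemq := hmem q (by rw [hm]; simp)
    have hmemr := hmem r (by rw [hm]; simp)
    -- find which element has degree j-1
    have key : ∃ x y z : ℕ × ℤ, Finsupp.toMultiset π = {x, y, z} ∧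
        x.2 = j - 1 ∧ y.2 = j ∧ z.2 = j ∧
        (1 ≤ x.1 ∧ x.1 ≤ 8) ∧ (1 ≤ y.1 ∧ y.1 ≤ 8) ∧ (1 ≤ z.1 ∧ z.1 ≤ 8) := by
      have hp2 : p.2 = j - 1 ∨ q.2 = j - 1 ∨ r.2 = j - 1 := by
        have h0 : (j - 1) ∈ (p.2 ::ₘ q.2 ::ₘ ({r.2} : Multiset ℤ)) := by
          rw [hs]; simp
        simp only [Multiset.mem_cons, Multiset.mem_singleton] at h0
        tauto
      have hsplit : ∀ d e : ℤ, (d ::ₘ ({e} : Multiset ℤ)) = j ::ₘ {j} → d = j ∧ e = j := by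
        intro d e h
        have h1 : d ∈ (j ::ₘ ({j} : Multiset ℤ)) := by rw [← h]; simp
        have h2 : e ∈ (j ::ₘ ({j} : Multiset ℤ)) := by rw [← h]; simp
        simp only [Multiset.mem_cons, Multiset.mem_singleton, or_self] at h1 h2
        exact ⟨h1, h2⟩
      rcases hp2 with h | h | h
      · rw [h, Multiset.cons_inj_right] at hs
        obtain ⟨hq, hr⟩ := hsplit _ _ hs
        exact ⟨p, q, r, hm, h, hq, hr, hmemp, hmemq, hmemr⟩
      · rw [h, Multiset.cons_swap, Multiset.cons_inj_right] at hs
        obtain ⟨hp, hr⟩ := hsplit _ _ hs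
        refine ⟨q, p, r, ?_, h, hp, hr, hmemq, hmemp, hmemr⟩
        rw [hm]
        simp only [Multiset.insert_eq_cons]
        rw [Multiset.cons_swap]
      · rw [h] at hs
        rw [show (p.2 ::ₘ q.2 ::ₘ ({j - 1} : Multiset ℤ)) = (j - 1) ::ₘ p.2 ::ₘ {q.2} by
          rw [← Multiset.cons_zero (j - 1), Multiset.cons_swap q.2, Multiset.cons_swap p.2,
            Multiset.cons_zero]] at hs
        rw [Multiset.cons_inj_right] at hs
        obtain ⟨hp, hq⟩ := hsplit _ _ hs
        refine ⟨r, p, q, ?_, h, hp, hq, hmemr, hmemp, hmemq⟩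
        rw [hm]
        simp only [Multiset.insert_eq_cons]
        rw [← Multiset.cons_zero r, Multiset.cons_swap q, Multiset.cons_swap p,
          Multiset.cons_zero]
    obtain ⟨x, y, z, hxyz, hx2, hy2, hz2, hxb, hyb, hzb⟩ := key
    obtain ⟨x1, x2⟩ := x; obtain ⟨y1, y2⟩ := y; obtain ⟨z1, z2⟩ := z
    dsimp at hx2 hy2 hz2 hxb hyb hzb
    subst hx2; subst hy2; subst hz2
    rcases le_total y1 z1 with hle | hle
    · refine ⟨(x1, y1, z1), ?_, ?_⟩
      · simp [triples, Finset.mem_filter, Finset.mem_product, Finset.mem_Icc]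
        exact ⟨⟨hxb, hyb, hzb⟩, hle⟩
      · apply toMultiset_injective
        rw [toMultiset_Pc, hxyz]
    · refine ⟨(x1, z1, y1), ?_, ?_⟩
      · simp [triples, Finset.mem_filter, Finset.mem_product, Finset.mem_Icc]
        exact ⟨⟨hxb, hzb, hyb⟩, hle⟩
      · apply toMultiset_injective
        rw [toMultiset_Pc, hxyz]
        simp only [Multiset.insert_eq_cons]
        rw [Multiset.cons_inj_right, ← Multiset.cons_zero (y1, _), ← Multiset.cons_zero (z1, _),
          Multiset.cons_swap]
  · rintro ⟨⟨a, b, c⟩, ht, rfl⟩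
    simp only [triples, Finset.mem_filter, Finset.mem_product, Finset.mem_Icc] at ht
    obtain ⟨⟨ha, hb, hc⟩, -⟩ := ht
    refine ⟨?_, ?_, shape_Pc j a b c⟩
    · intro q hq
      rw [Finsupp.mem_support_iff] at hq
      have h1 : 1 ≤ Pc j a b c q := Nat.one_le_iff_ne_zero.mpr hq
      rw [Pc_pos] at h1
      rcases h1 with h | h | h <;> rw [← h] <;> simpa
    · rw [cpLength_eq, toMultiset_Pc]; rfl


lemma Pc_injOn (j : ℤ) : ∀ t ∈ triples, ∀ t' ∈ triples,
    Pc j t.1 t.2.1 t.2.2 = Pc j t'.1 t'.2.1 t'.2.2 → t = t' := by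
  rintro ⟨a, b, c⟩ ht ⟨a', b', c'⟩ ht' h
  simp only [triples, Finset.mem_filter] at ht ht'
  have hbc : b ≤ c := ht.2
  have hbc' : b' ≤ c' := ht'.2
  have hmm := congrArg Finsupp.toMultiset h
  rw [toMultiset_Pc, toMultiset_Pc] at hmm
  simp only [Multiset.insert_eq_cons] at hmm
  -- a = a'
  have ha : a = a' := by
    have hmem : ((a, j-1) : ℕ × ℤ) ∈ ((a', j-1) ::ₘ (b', j) ::ₘ {(c', j)} : Multiset (ℕ × ℤ)) := by
      rw [← hmm]; simp
    simp only [Multiset.mem_cons, Multiset.mem_singleton, Prod.mk.injEq] at hmem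
    rcases hmem with ⟨h1, -⟩ | ⟨-, h2⟩ | ⟨-, h2⟩ <;> first | exact h1 | omega
  subst ha
  rw [Multiset.cons_inj_right] at hmm
  have hb : b = b' ∨ b = c' := by
    have hmem : ((b, j) : ℕ × ℤ) ∈ ((b', j) ::ₘ {(c', j)} : Multiset (ℕ × ℤ)) := by
      rw [← hmm]; simp
    simp only [Multiset.mem_cons, Multiset.mem_singleton, Prod.mk.injEq] at hmem
    tauto
  have hc : c = b' ∨ c = c' := by
    have hmem : ((c, j) : ℕ × ℤ) ∈ ((b', j) ::ₘ {(c', j)} : Multiset (ℕ × ℤ)) := by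
      rw [← hmm]; simp
    simp only [Multiset.mem_cons, Multiset.mem_singleton, Prod.mk.injEq] at hmem
    tauto
  have hb' : b' = b ∨ b' = c := by
    have hmem : ((b', j) : ℕ × ℤ) ∈ ((b, j) ::ₘ {(c, j)} : Multiset (ℕ × ℤ)) := by
      rw [hmm]; simp
    simp only [Multiset.mem_cons, Multiset.mem_singleton, Prod.mk.injEq] at hmem
    tauto
  have hc' : c' = b ∨ c' = c := by
    have hmem : ((c', j) : ℕ × ℤ) ∈ ((b, j) ::ₘ {(c, j)} : Multiset (ℕ × ℤ)) := by
      rw [hmm]; simp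
    simp only [Multiset.mem_cons, Multiset.mem_singleton, Prod.mk.injEq] at hmem
    tauto
  have : b = b' ∧ c = c' := by omega
  simp [this.1, this.2]


set_option maxRecDepth 100000 in
/-- The sum of `N(π)` over all colored partitions of length 3 and shape `{j−1,j,j}` is 162. -/
theorem sum_N_shape_jm1_j_j (j : ℤ) :
    (∑ᶠ π ∈ {π : CPart | cpValid π ∧ cpLength π = 3 ∧ cpShape π = {j - 1, j, j}},
      Npi π) = 162 := by
  classical
  have hset : {π : CPart | cpValid π ∧ cpLength π = 3 ∧ cpShape π = {j - 1, j, j}} =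
      ↑(triples.image fun t => Pc j t.1 t.2.1 t.2.2) := by
    ext π
    rw [mem_set_iff]
    simp [Finset.mem_image]
  rw [hset, finsum_mem_coe_finset, Finset.sum_image (Pc_injOn j)]
  rw [Finset.sum_congr rfl fun t _ => Npi_Pc j t.1 t.2.1 t.2.2]
  decide
end

section
/- For every j ∈ ℤ, the sum of N(π) over all colored partitions π of length 3 with shape {j−1, j−1, j} (two parts of degree j−1 and one part of degree j, with arbitrary colors) equals 162. -/
-- basic lemmas
lemma Xp_apply (s : ℕ) (k : ℤ) (p : ℕ × ℤ) :
    Xp s k p = if p.1 = s ∧ p.2 = k then 1 else 0 := by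
  rcases p with ⟨x, y⟩
  simp [Xp, Finsupp.single_apply, Prod.ext_iff, eq_comm, and_comm]

lemma cpLength_add (π σ : CPart) : cpLength (π + σ) = cpLength π + cpLength σ := by
  simp [cpLength, Finsupp.sum_add_index]

lemma cpLength_Xp (s : ℕ) (k : ℤ) : cpLength (Xp s k) = 1 := by
  simp [cpLength, Xp, Finsupp.sum_single_index]

lemma cpShape_add (π σ : CPart) : cpShape (π + σ) = cpShape π + cpShape σ := by
  rw [cpShape, cpShape, cpShape, Finsupp.sum_add_index' (h := fun (p : ℕ × ℤ) (m : ℕ) => Multiset.replicate m p.2)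
    (fun _ => Multiset.replicate_zero _)
    (fun _ _ _ => Multiset.replicate_add _ _ _)]

lemma cpShape_Xp (s : ℕ) (k : ℤ) : cpShape (Xp s k) = {k} := by
  rw [cpShape, Xp, Finsupp.sum_single_index (h := fun (p : ℕ × ℤ) (m : ℕ) => Multiset.replicate m p.2)
    (Multiset.replicate_zero _)]
  simp

lemma cpLength_eq_zero {π : CPart} (h : cpLength π = 0) : π = 0 := by
  by_contra hne
  obtain ⟨p, hp⟩ := Finsupp.support_nonempty_iff.2 hne
  have hp' := Finsupp.mem_support_iff.1 hp
  have : π p ≤ cpLength π :=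
    Finset.single_le_sum (f := fun q => π q) (fun _ _ => Nat.zero_le _) hp
  omega

lemma exists_erase (π : CPart) (h : 0 < cpLength π) :
    ∃ s k σ, π = Xp s k + σ ∧ cpLength σ + 1 = cpLength π := by
  have hne : π ≠ 0 := by
    rintro rfl; simp [cpLength] at h
  obtain ⟨⟨s, k⟩, hp⟩ := Finsupp.support_nonempty_iff.2 hne
  have hp' := Finsupp.mem_support_iff.1 hp
  have hle : Xp s k ≤ π := by
    rw [Xp, Finsupp.single_le_iff]; omega
  refine ⟨s, k, π - Xp s k, (add_tsub_cancel_of_le hle).symm, ?_⟩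
  have h2 := congrArg cpLength (add_tsub_cancel_of_le hle)
  rw [cpLength_add, cpLength_Xp] at h2
  omega

lemma decomp3 (π : CPart) (h : cpLength π = 3) :
    ∃ s1 k1 s2 k2 s3 k3, π = Xp s1 k1 + Xp s2 k2 + Xp s3 k3 := by
  obtain ⟨s1, k1, σ, rfl, h1⟩ := exists_erase π (by omega)
  rw [cpLength_add, cpLength_Xp] at h
  obtain ⟨s2, k2, τ, rfl, h2⟩ := exists_erase σ (by omega)
  rw [cpLength_add, cpLength_Xp] at h
  obtain ⟨s3, k3, υ, rfl, h3⟩ := exists_erase τ (by omega)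
  rw [cpLength_add, cpLength_Xp] at h
  have h0 : υ = 0 := cpLength_eq_zero (by omega)
  exact ⟨s1, k1, s2, k2, s3, k3, by rw [h0]; abel⟩

lemma shape3 {k1 k2 k3 j : ℤ} (h : ({k1, k2, k3} : Multiset ℤ) = {j - 1, j - 1, j}) :
    (k1 = j-1 ∧ k2 = j-1 ∧ k3 = j) ∨ (k1 = j-1 ∧ k2 = j ∧ k3 = j-1) ∨
    (k1 = j ∧ k2 = j-1 ∧ k3 = j-1) := by
  have h1 : k1 = j - 1 ∨ k1 = j := by
    have : k1 ∈ ({j-1, j-1, j} : Multiset ℤ) := h ▸ (by simp)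
    simpa using this
  have h2 : k2 = j - 1 ∨ k2 = j := by
    have : k2 ∈ ({j-1, j-1, j} : Multiset ℤ) := h ▸ (by simp)
    simpa using this
  have h3 : k3 = j - 1 ∨ k3 = j := by
    have : k3 ∈ ({j-1, j-1, j} : Multiset ℤ) := h ▸ (by simp)
    simpa using this
  have hc := congrArg (Multiset.count j) h
  simp only [Multiset.insert_eq_cons, Multiset.count_cons, Multiset.count_singleton] at hc
  rcases h1 with h1 | h1 <;> rcases h2 with h2 | h2 <;> rcases h3 with h3 | h3 <;>
    split_ifs at hc <;> omega

lemma mem_S_iff (j : ℤ) (π : CPart) :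
    (cpValid π ∧ cpLength π = 3 ∧ cpShape π = {j - 1, j - 1, j}) ↔
    ∃ a b c : ℕ, 1 ≤ a ∧ a ≤ b ∧ b ≤ 8 ∧ 1 ≤ c ∧ c ≤ 8 ∧
      π = Xp a (j-1) + Xp b (j-1) + Xp c j := by
  constructor
  · rintro ⟨hv, hl, hs⟩
    obtain ⟨s1, k1, s2, k2, s3, k3, rfl⟩ := decomp3 π hl
    have hb1 : 1 ≤ s1 ∧ s1 ≤ 8 := by
      refine hv (s1, k1) ?_
      rw [Finsupp.mem_support_iff]
      simp only [Finsupp.add_apply, Xp_apply, and_self, if_true]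
      split_ifs <;> omega
    have hb2 : 1 ≤ s2 ∧ s2 ≤ 8 := by
      refine hv (s2, k2) ?_
      rw [Finsupp.mem_support_iff]
      simp only [Finsupp.add_apply, Xp_apply, and_self, if_true]
      split_ifs <;> omega
    have hb3 : 1 ≤ s3 ∧ s3 ≤ 8 := by
      refine hv (s3, k3) ?_
      rw [Finsupp.mem_support_iff]
      simp only [Finsupp.add_apply, Xp_apply, and_self, if_true]
      split_ifs <;> omega
    rw [cpShape_add, cpShape_add, cpShape_Xp, cpShape_Xp, cpShape_Xp] at hs
    have hs' : ({k1, k2, k3} : Multiset ℤ) = {j - 1, j - 1, j} := by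
      rw [← hs]; rfl
    rcases shape3 hs' with ⟨e1, e2, e3⟩ | ⟨e1, e2, e3⟩ | ⟨e1, e2, e3⟩ <;>
      subst e1 <;> subst e2 <;> subst e3
    · rcases le_total s1 s2 with hle | hle
      · exact ⟨s1, s2, s3, by omega, hle, by omega, by omega, by omega, rfl⟩
      · exact ⟨s2, s1, s3, by omega, hle, by omega, by omega, by omega, by abel⟩
    · rcases le_total s1 s3 with hle | hle
      · exact ⟨s1, s3, s2, by omega, hle, by omega, by omega, by omega, by abel⟩
      · exact ⟨s3, s1, s2, by omega, hle, by omega, by omega, by omega, by abel⟩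
    · rcases le_total s2 s3 with hle | hle
      · exact ⟨s2, s3, s1, by omega, hle, by omega, by omega, by omega, by abel⟩
      · exact ⟨s3, s2, s1, by omega, hle, by omega, by omega, by omega, by abel⟩
  · rintro ⟨a, b, c, h1, h2, h3, h4, h5, rfl⟩
    refine ⟨?_, ?_, ?_⟩
    · intro p hp
      have := Finsupp.mem_support_iff.1 hp
      simp only [Finsupp.add_apply, Xp_apply, and_self, if_true] at this
      split_ifs at this <;> omega
    · rw [cpLength_add, cpLength_add, cpLength_Xp, cpLength_Xp, cpLength_Xp]
    · rw [cpShape_add, cpShape_add, cpShape_Xp, cpShape_Xp, cpShape_Xp]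
      rfl
lemma Eset_eq (a b c : ℕ) (j : ℤ) :
    Eset (Xp a (j-1) + Xp b (j-1) + Xp c j) =
      (if (a,b) ∈ eqPairs ∨ (b,a) ∈ eqPairs then ({Xp a (j-1) + Xp b (j-1)} : Set CPart)
        else ∅) ∪
      (if (a,c) ∈ adjPairs then ({Xp a (j-1) + Xp c j} : Set CPart) else ∅) ∪
      (if (b,c) ∈ adjPairs then ({Xp b (j-1) + Xp c j} : Set CPart) else ∅) := by
  ext ρ
  constructor
  · rintro ⟨hlt, hsub⟩
    rcases hlt with ⟨j', ⟨p1, p2⟩, hp, rfl⟩ | ⟨j', ⟨p1, p2⟩, hp, rfl⟩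
    · have h1 := hsub (p1, j')
      have h2 := hsub (p2, j')
      simp only [Finsupp.add_apply, Xp_apply, and_self, and_true, true_and,
        eq_self_iff_true, if_true] at h1 h2
      have key : j' = j - 1 ∧ ((p1 = a ∧ p2 = b) ∨ (p1 = b ∧ p2 = a)) := by
        split_ifs at h1 h2 <;> omega
      obtain ⟨rfl, hcase⟩ := key
      rcases hcase with ⟨rfl, rfl⟩ | ⟨rfl, rfl⟩
      · apply Set.mem_union_left; apply Set.mem_union_left
        rw [if_pos (Or.inl hp)]; rfl
      · apply Set.mem_union_left; apply Set.mem_union_left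
        rw [if_pos (Or.inr hp)]
        exact Set.mem_singleton_iff.2 (add_comm _ _)
    · have h1 := hsub (p1, j' - 1)
      have h2 := hsub (p2, j')
      simp only [Finsupp.add_apply, Xp_apply, and_self, and_true, true_and,
        eq_self_iff_true, if_true] at h1 h2
      have key : j' = j ∧ (p1 = a ∨ p1 = b) ∧ p2 = c := by
        split_ifs at h1 h2 <;> omega
      obtain ⟨rfl, hor, rfl⟩ := key
      rcases hor with rfl | rfl
      · apply Set.mem_union_left; apply Set.mem_union_right
        rw [if_pos hp]; rfl
      · apply Set.mem_union_right
        rw [if_pos hp]; rfl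
  · intro h
    rcases h with (h | h) | h
    · split_ifs at h with hc
      · rw [Set.mem_singleton_iff] at h
        subst h
        constructor
        · rcases hc with hc | hc
          · exact Or.inl ⟨j - 1, (a, b), hc, rfl⟩
          · exact Or.inl ⟨j - 1, (b, a), hc, add_comm (Xp a (j-1)) (Xp b (j-1))⟩
        · intro q
          simp only [Finsupp.add_apply, Xp_apply]
          split_ifs <;> omega
      · exact absurd h (Set.notMem_empty ρ)
    · split_ifs at h with hc
      · rw [Set.mem_singleton_iff] at h
        subst h
        refine ⟨Or.inr ⟨j, (a, c), hc, rfl⟩, ?_⟩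
        intro q
        simp only [Finsupp.add_apply, Xp_apply]
        split_ifs <;> omega
      · exact absurd h (Set.notMem_empty ρ)
    · split_ifs at h with hc
      · rw [Set.mem_singleton_iff] at h
        subst h
        refine ⟨Or.inr ⟨j, (b, c), hc, rfl⟩, ?_⟩
        intro q
        simp only [Finsupp.add_apply, Xp_apply]
        split_ifs <;> omega
      · exact absurd h (Set.notMem_empty ρ)
def cnt (a b c : ℕ) : ℕ :=
  (if (a,b) ∈ eqPairs ∨ (b,a) ∈ eqPairs then 1 else 0) +
  (if (a,c) ∈ adjPairs then 1 else 0) +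
  (if a ≠ b ∧ (b,c) ∈ adjPairs then 1 else 0)

lemma ne_eq_adj (a b c x : ℕ) (j : ℤ) :
    Xp a (j-1) + Xp b (j-1) ≠ Xp x (j-1) + Xp c j := by
  intro h
  have := DFunLike.congr_fun h (c, j)
  simp only [Finsupp.add_apply, Xp_apply, and_self, and_true, true_and,
    eq_self_iff_true, if_true] at this
  split_ifs at this <;> omega

lemma adj_eq_iff (a b c : ℕ) (j : ℤ) :
    Xp a (j-1) + Xp c j = Xp b (j-1) + Xp c j ↔ a = b := by
  constructor
  · intro h
    have := DFunLike.congr_fun h (a, j-1)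
    simp only [Finsupp.add_apply, Xp_apply, and_self, and_true, true_and,
      eq_self_iff_true, if_true] at this
    split_ifs at this <;> omega
  · rintro rfl; rfl

lemma adj_ne (a b c : ℕ) (j : ℤ) (hab : a ≠ b) :
    Xp a (j-1) + Xp c j ≠ Xp b (j-1) + Xp c j :=
  fun h => hab ((adj_eq_iff a b c j).1 h)

lemma ncard_Eset (a b c : ℕ) (j : ℤ) :
    (Eset (Xp a (j-1) + Xp b (j-1) + Xp c j)).ncard = cnt a b c := by
  rw [Eset_eq]
  by_cases hab : a = b
  · subst hab
    rw [Set.union_assoc, Set.union_self]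
    by_cases h1 : (a,a) ∈ eqPairs <;> by_cases hA : (a,c) ∈ adjPairs <;>
      simp only [h1, hA, or_self, if_true, if_false, ite_true, ite_false,
        Set.union_empty, Set.empty_union]
    · rw [Set.singleton_union, Set.ncard_insert_of_notMem (by
        simp only [Set.mem_singleton_iff]; exact ne_eq_adj a a c a j),
        Set.ncard_singleton]
      simp [cnt, h1, hA]
    · rw [Set.ncard_singleton]; simp [cnt, h1, hA]
    · rw [Set.ncard_singleton]; simp [cnt, h1, hA]
    · rw [Set.ncard_empty]; simp [cnt, h1, hA]
  · by_cases h1 : (a,b) ∈ eqPairs ∨ (b,a) ∈ eqPairs <;>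
      by_cases hA : (a,c) ∈ adjPairs <;> by_cases hB : (b,c) ∈ adjPairs <;>
        simp only [h1, hA, hB, if_true, if_false, ite_true, ite_false,
          Set.union_empty, Set.empty_union]
    · rw [Set.union_assoc, Set.singleton_union, Set.singleton_union,
        Set.ncard_insert_of_notMem (by
          simp only [Set.mem_insert_iff, Set.mem_singleton_iff]
          push_neg
          exact ⟨ne_eq_adj a b c a j, ne_eq_adj a b c b j⟩),
        Set.ncard_insert_of_notMem (by
          simp only [Set.mem_singleton_iff]
          exact adj_ne a b c j hab),
        Set.ncard_singleton]
      simp [cnt, h1, hA, hB, hab]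
    · rw [Set.singleton_union, Set.ncard_insert_of_notMem (by
          simp only [Set.mem_singleton_iff]; exact ne_eq_adj a b c a j),
        Set.ncard_singleton]
      simp [cnt, h1, hA, hB, hab]
    · rw [Set.singleton_union, Set.ncard_insert_of_notMem (by
          simp only [Set.mem_singleton_iff]; exact ne_eq_adj a b c b j),
        Set.ncard_singleton]
      simp [cnt, h1, hA, hB, hab]
    · rw [Set.ncard_singleton]; simp [cnt, h1, hA, hB, hab]
    · rw [Set.singleton_union, Set.ncard_insert_of_notMem (by
          simp only [Set.mem_singleton_iff]; exact adj_ne a b c j hab),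
        Set.ncard_singleton]
      simp [cnt, h1, hA, hB, hab]
    · rw [Set.ncard_singleton]; simp [cnt, h1, hA, hB, hab]
    · rw [Set.ncard_singleton]; simp [cnt, h1, hA, hB, hab]
    · rw [Set.ncard_empty]; simp [cnt, h1, hA, hB, hab]

lemma Npi_eq (a b c : ℕ) (j : ℤ) :
    Npi (Xp a (j-1) + Xp b (j-1) + Xp c j) = cnt a b c - 1 := by
  rw [Npi, ncard_Eset]
lemma inj_triple {a b c a' b' c' : ℕ} {j : ℤ} (hab : a ≤ b) (hab' : a' ≤ b')
    (h : Xp a (j-1) + Xp b (j-1) + Xp c j = Xp a' (j-1) + Xp b' (j-1) + Xp c' j) :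
    a = a' ∧ b = b' ∧ c = c' := by
  have fc : c = c' := by
    have := DFunLike.congr_fun h (c, j)
    simp only [Finsupp.add_apply, Xp_apply, and_self, and_true, true_and,
      eq_self_iff_true, if_true] at this
    split_ifs at this <;> omega
  have f1 : a = a' ∨ a = b' := by
    have := DFunLike.congr_fun h (a, j-1)
    simp only [Finsupp.add_apply, Xp_apply, and_self, and_true, true_and,
      eq_self_iff_true, if_true] at this
    split_ifs at this <;> omega
  have f2 : b = a' ∨ b = b' := by
    have := DFunLike.congr_fun h (b, j-1)
    simp only [Finsupp.add_apply, Xp_apply, and_self, and_true, true_and,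
      eq_self_iff_true, if_true] at this
    split_ifs at this <;> omega
  have f3 : a' = a ∨ a' = b := by
    have := DFunLike.congr_fun h (a', j-1)
    simp only [Finsupp.add_apply, Xp_apply, and_self, and_true, true_and,
      eq_self_iff_true, if_true] at this
    split_ifs at this <;> omega
  have f4 : b' = a ∨ b' = b := by
    have := DFunLike.congr_fun h (b', j-1)
    simp only [Finsupp.add_apply, Xp_apply, and_self, and_true, true_and,
      eq_self_iff_true, if_true] at this
    split_ifs at this <;> omega
  omega

/-- The sum of `N(π)` over all colored partitions of length 3 and shape `{j−1,j−1,j}` is 162. -/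
theorem sum_N_shape_jm1_jm1_j (j : ℤ) :
    (∑ᶠ π ∈ {π : CPart | cpValid π ∧ cpLength π = 3 ∧ cpShape π = {j - 1, j - 1, j}},
      Npi π) = 162 := by
  classical
  set T : Finset (ℕ × ℕ × ℕ) :=
    (Finset.range 9 ×ˢ Finset.range 9 ×ˢ Finset.range 9).filter
      (fun t => 1 ≤ t.1 ∧ t.1 ≤ t.2.1 ∧ 1 ≤ t.2.2) with hT
  have hmemT : ∀ t : ℕ × ℕ × ℕ, t ∈ T ↔
      1 ≤ t.1 ∧ t.1 ≤ t.2.1 ∧ t.2.1 ≤ 8 ∧ 1 ≤ t.2.2 ∧ t.2.2 ≤ 8 := by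
    intro t
    simp only [hT, Finset.mem_filter, Finset.mem_product, Finset.mem_range]
    omega
  have hS : {π : CPart | cpValid π ∧ cpLength π = 3 ∧ cpShape π = {j - 1, j - 1, j}} =
      (fun t : ℕ × ℕ × ℕ => Xp t.1 (j-1) + Xp t.2.1 (j-1) + Xp t.2.2 j) '' ↑T := by
    ext π
    rw [Set.mem_setOf_eq, mem_S_iff]
    constructor
    · rintro ⟨a, b, c, h1, h2, h3, h4, h5, rfl⟩
      exact ⟨(a, b, c), by rw [Finset.mem_coe, hmemT]; exact ⟨h1, h2, h3, h4, h5⟩, rfl⟩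
    · rintro ⟨⟨a, b, c⟩, ht, rfl⟩
      rw [Finset.mem_coe, hmemT] at ht
      exact ⟨a, b, c, ht.1, ht.2.1, ht.2.2.1, ht.2.2.2.1, ht.2.2.2.2, rfl⟩
  have hinj : Set.InjOn (fun t : ℕ × ℕ × ℕ => Xp t.1 (j-1) + Xp t.2.1 (j-1) + Xp t.2.2 j) ↑T := by
    rintro ⟨a, b, c⟩ ha ⟨a', b', c'⟩ hb h
    rw [Finset.mem_coe, hmemT] at ha hb
    obtain ⟨e1, e2, e3⟩ := inj_triple ha.2.1 hb.2.1 h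
    exact Prod.ext e1 (Prod.ext e2 e3)
  rw [hS, finsum_mem_image hinj, finsum_mem_coe_finset]
  have : ∀ t ∈ T, Npi (Xp t.1 (j-1) + Xp t.2.1 (j-1) + Xp t.2.2 j) = cnt t.1 t.2.1 t.2.2 - 1 :=
    fun t _ => Npi_eq t.1 t.2.1 t.2.2 j
  rw [Finset.sum_congr rfl this]
  rw [hT]
  set_option maxRecDepth 100000 in decide
end
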